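/- (Horizontal neutrality for OLFM) Let S and S' be two OLFM systems on the same odd number n of actors with the same vertex set, where in S actor i is an opinion leader or independent actor, actor j is a follower, actor h is an opinion leader with h ∈ P_G(j), and E(G') = E(G) ∪ {(i,j)}. Then SAT_{S'}(i) - SAT_S(i) = SAT_S(h) - SAT_{S'}(h). -/
import Mathlib


open Finset

/-- The set of predecessors of `i` in the digraph with edge set `E`. -/
def preds {n : ℕ} (E : Finset (Fin n × Fin n)) (i : Fin n) : Finset (Fin n) :=
  Finset.univ.filter (fun j => (j, i) ∈ E)

/-- The set of successors of `i` in the digraph with edge set `E`. -/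
def succs {n : ℕ} (E : Finset (Fin n × Fin n)) (i : Fin n) : Finset (Fin n) :=
  Finset.univ.filter (fun j => (i, j) ∈ E)

/-- `E` is the edge set of an OLF system: every edge runs from a vertex with no
predecessors (an opinion leader) to a vertex with no successors (a follower). -/
def IsOLF {n : ℕ} (E : Finset (Fin n × Fin n)) : Prop :=
  ∀ e ∈ E, preds E e.1 = ∅ ∧ succs E e.2 = ∅

/-- One step of the unanimity rule: actor `i` adopts the common decision of its
predecessors (as recorded in `c`) if they are nonempty and unanimous, and keeps
its own initial decision `x i` otherwise. -/
def unanStep {n : ℕ} (E : Finset (Fin n × Fin n)) (x c : Fin n → Bool) (i : Fin n) : Bool :=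
  if (preds E i).Nonempty ∧ ∀ j ∈ preds E i, c j = true then true
  else if (preds E i).Nonempty ∧ ∀ j ∈ preds E i, c j = false then false
  else x i

/-- The collective decision vector of an OLF system. -/
def olfVec {n : ℕ} (E : Finset (Fin n × Fin n)) (x : Fin n → Bool) : Fin n → Bool :=
  unanStep E x x

/-- Simple majority over a decision vector. -/
def majority {n : ℕ} (c : Fin n → Bool) : Bool :=
  decide ((Finset.univ.filter (fun i => c i = true)).card >
          (Finset.univ.filter (fun i => c i = false)).card)

/-- The collective decision function of an OLF system. -/
def olfC {n : ℕ} (E : Finset (Fin n × Fin n)) (x : Fin n → Bool) : Bool :=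
  majority (olfVec E x)

/-- The satisfaction score of actor `i` under a collective decision making model `C`. -/
def SAT {n : ℕ} (C : (Fin n → Bool) → Bool) (i : Fin n) : ℕ :=
  (Finset.univ.filter (fun x : Fin n → Bool => C x = x i)).card

/-- `layer` witnesses that `E` is a layered digraph: every edge goes from a
vertex in some layer to a vertex in the layer immediately below. -/
def IsLayered {n : ℕ} (E : Finset (Fin n × Fin n)) (layer : Fin n → ℕ) : Prop :=
  ∀ e ∈ E, layer e.2 = layer e.1 + 1

/-- `E` is the edge set of an OLFM system, i.e. a layered digraph. -/
def IsOLFM {n : ℕ} (E : Finset (Fin n × Fin n)) : Prop :=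
  ∃ layer : Fin n → ℕ, IsLayered E layer

/-- The collective decision vector of an OLFM system, computed layer by layer:
since each layer only depends on the one above it, iterating the unanimity step
`n` times computes the stable, layer-by-layer collective decision vector. -/
def olfmVec {n : ℕ} (E : Finset (Fin n × Fin n)) (x : Fin n → Bool) : Fin n → Bool :=
  (fun c => unanStep E x c)^[n] x

/-- The collective decision function of an OLFM system. -/
def olfmC {n : ℕ} (E : Finset (Fin n × Fin n)) (x : Fin n → Bool) : Bool :=
  majority (olfmVec E x)

lemma mem_preds {n : ℕ} {E : Finset (Fin n × Fin n)} {p v : Fin n} :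
    p ∈ preds E v ↔ (p, v) ∈ E := by simp [preds]

lemma unanStep_congr {n : ℕ} (E : Finset (Fin n × Fin n)) (x c c' : Fin n → Bool) (v : Fin n)
    (hc : ∀ p ∈ preds E v, c p = c' p) : unanStep E x c v = unanStep E x c' v := by
  have e1 : (∀ p ∈ preds E v, c p = true) = (∀ p ∈ preds E v, c' p = true) := by
    simp only [eq_iff_iff]
    exact ⟨fun H p hp => by rw [← hc p hp]; exact H p hp,
           fun H p hp => by rw [hc p hp]; exact H p hp⟩
  have e2 : (∀ p ∈ preds E v, c p = false) = (∀ p ∈ preds E v, c' p = false) := by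
    simp only [eq_iff_iff]
    exact ⟨fun H p hp => by rw [← hc p hp]; exact H p hp,
           fun H p hp => by rw [hc p hp]; exact H p hp⟩
  simp only [unanStep, e1, e2]

lemma iter_succ_pt {n : ℕ} (E : Finset (Fin n × Fin n)) (x : Fin n → Bool) (t : ℕ) (v : Fin n) :
    (fun c => unanStep E x c)^[t+1] x v
      = unanStep E x ((fun c => unanStep E x c)^[t] x) v :=
  congrFun (Function.iterate_succ_apply' (fun c => unanStep E x c) t x) v

lemma iterate_stab {n : ℕ} (E : Finset (Fin n × Fin n)) (layer : Fin n → ℕ)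
    (hL : IsLayered E layer) (x : Fin n → Bool) :
    ∀ t, ∀ v : Fin n, (univ.filter (fun w => layer w < layer v)).card ≤ t →
      (fun c => unanStep E x c)^[t+1] x v = (fun c => unanStep E x c)^[t] x v := by
  intro t
  induction t with
  | zero =>
    intro v hv
    have hp : preds E v = ∅ := by
      rw [Finset.eq_empty_iff_forall_notMem]
      intro p hp
      have hlt : layer p < layer v := by
        have := hL (p, v) (mem_preds.1 hp); simp at this; omega
      have : 0 < (univ.filter (fun w => layer w < layer v)).card :=
        Finset.card_pos.2 ⟨p, by simp [hlt]⟩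
      omega
    rw [iter_succ_pt]
    simp [unanStep, hp, Finset.not_nonempty_empty]
  | succ t ih =>
    intro v hv
    rw [iter_succ_pt E x (t+1) v, iter_succ_pt E x t v]
    apply unanStep_congr
    intro p hp
    have hlt : layer p < layer v := by
      have := hL (p, v) (mem_preds.1 hp); simp at this; omega
    apply ih
    have hss : (univ.filter (fun w => layer w < layer p)) ⊂
        (univ.filter (fun w => layer w < layer v)) := by
      constructor
      · intro w hw; simp at hw ⊢; omega
      · intro hsub
        have := hsub (by simp [hlt] : p ∈ univ.filter (fun w => layer w < layer v))
        simp at this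
    have := Finset.card_lt_card hss
    omega

lemma olfmVec_fix {n : ℕ} (E : Finset (Fin n × Fin n)) (layer : Fin n → ℕ)
    (hL : IsLayered E layer) (hn1 : 1 ≤ n) (x : Fin n → Bool) (v : Fin n) :
    olfmVec E x v = unanStep E x (olfmVec E x) v := by
  obtain ⟨m, rfl⟩ : ∃ m, n = m + 1 := ⟨n - 1, by omega⟩
  show (fun c => unanStep E x c)^[m+1] x v = _
  rw [iter_succ_pt E x m v]
  apply unanStep_congr
  intro p hp
  have hcard : (univ.filter (fun w => layer w < layer p)).card ≤ m := by
    have hsub : (univ.filter (fun w => layer w < layer p)) ⊆ univ.erase p := by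
      intro w hw; simp at hw ⊢
      intro hwp; subst hwp; omega
    have := Finset.card_le_card hsub
    rw [Finset.card_erase_of_mem (mem_univ p), Finset.card_univ, Fintype.card_fin] at this
    omega
  exact (iterate_stab E layer hL x m p hcard).symm

lemma olfmVec_noPreds {n : ℕ} (E : Finset (Fin n × Fin n)) (hn1 : 1 ≤ n)
    (x : Fin n → Bool) (v : Fin n) (hv : preds E v = ∅) : olfmVec E x v = x v := by
  obtain ⟨m, rfl⟩ : ∃ m, n = m + 1 := ⟨n - 1, by omega⟩
  show (fun c => unanStep E x c)^[m+1] x v = _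
  rw [iter_succ_pt E x m v]
  simp [unanStep, hv, Finset.not_nonempty_empty]

lemma preds_insert_ne {n : ℕ} (E : Finset (Fin n × Fin n)) (i j v : Fin n) (hvj : v ≠ j) :
    preds (insert (i, j) E) v = preds E v := by
  ext p
  simp only [preds, Finset.mem_filter, Finset.mem_insert, Prod.mk.injEq, mem_univ, true_and]
  constructor
  · rintro (⟨rfl, rfl⟩ | hE)
    · exact absurd rfl hvj
    · exact hE
  · exact Or.inr

lemma preds_insert_self {n : ℕ} (E : Finset (Fin n × Fin n)) (i j : Fin n) :
    preds (insert (i, j) E) j = insert i (preds E j) := by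
  ext p
  simp only [preds, Finset.mem_filter, Finset.mem_insert, Prod.mk.injEq, mem_univ, true_and]
  tauto

lemma olfm_agree_aux {n : ℕ} (E : Finset (Fin n × Fin n)) (i j : Fin n) (hjS : succs E j = ∅)
    (x : Fin n → Bool) :
    ∀ t, ∀ v : Fin n, v ≠ j →
      (fun c => unanStep (insert (i, j) E) x c)^[t] x v = (fun c => unanStep E x c)^[t] x v := by
  intro t
  induction t with
  | zero => intro v _; rfl
  | succ t ih =>
    intro v hvj
    rw [iter_succ_pt (insert (i, j) E) x t v, iter_succ_pt E x t v]
    have hpe : preds (insert (i, j) E) v = preds E v := preds_insert_ne E i j v hvj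
    rw [show unanStep (insert (i,j) E) x ((fun c => unanStep (insert (i,j) E) x c)^[t] x) v
        = unanStep E x ((fun c => unanStep (insert (i,j) E) x c)^[t] x) v by
      simp only [unanStep, hpe]]
    apply unanStep_congr
    intro p hp
    have hpj : p ≠ j := by
      intro hpj
      have hv : (j, v) ∈ E := hpj ▸ mem_preds.1 hp
      have hmem : v ∈ succs E j := by simp [succs, hv]
      rw [hjS] at hmem; simp at hmem
    exact ih p hpj

lemma olfm_agree {n : ℕ} (E : Finset (Fin n × Fin n)) (i j : Fin n) (hjS : succs E j = ∅)
    (x : Fin n → Bool) (v : Fin n) (hvj : v ≠ j) :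
    olfmVec (insert (i, j) E) x v = olfmVec E x v :=
  olfm_agree_aux E i j hjS x n v hvj

lemma unanStep_eq_true {n : ℕ} {E : Finset (Fin n × Fin n)} {x c : Fin n → Bool} {v : Fin n}
    (h1 : (preds E v).Nonempty) (h2 : ∀ p ∈ preds E v, c p = true) :
    unanStep E x c v = true := by
  unfold unanStep; rw [if_pos ⟨h1, h2⟩]

lemma unanStep_eq_false {n : ℕ} {E : Finset (Fin n × Fin n)} {x c : Fin n → Bool} {v : Fin n}
    (h1 : (preds E v).Nonempty) (h2 : ∀ p ∈ preds E v, c p = false) :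
    unanStep E x c v = false := by
  unfold unanStep
  rw [if_neg, if_pos ⟨h1, h2⟩]
  rintro ⟨-, H⟩
  obtain ⟨p, hp⟩ := h1
  have := H p hp
  have := h2 p hp
  simp_all

lemma unanStep_mixed {n : ℕ} {E : Finset (Fin n × Fin n)} {x c : Fin n → Bool} {v p1 p2 : Fin n}
    (hp1 : p1 ∈ preds E v) (hc1 : c p1 = false)
    (hp2 : p2 ∈ preds E v) (hc2 : c p2 = true) :
    unanStep E x c v = x v := by
  unfold unanStep
  rw [if_neg, if_neg]
  · rintro ⟨-, H⟩; have := H p2 hp2; simp_all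
  · rintro ⟨-, H⟩; have := H p1 hp1; simp_all

lemma key_eq {n : ℕ} (E : Finset (Fin n × Fin n)) (layer : Fin n → ℕ) (hL : IsLayered E layer)
    (hn1 : 1 ≤ n) (i j h : Fin n) (hij : i ≠ j)
    (hi : preds E i = ∅) (hjP : (preds E j).Nonempty) (hjS : succs E j = ∅)
    (hhP : preds E h = ∅) (hhj : h ∈ preds E j)
    (layer' : Fin n → ℕ) (hL' : IsLayered (insert (i, j) E) layer')
    (x : Fin n → Bool) (hx : x i = x h) :
    olfmVec (insert (i, j) E) x = olfmVec E x := by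
  funext v
  by_cases hvj : v = j
  · rw [hvj]
    have hfix : olfmVec E x j = unanStep E x (olfmVec E x) j := olfmVec_fix E layer hL hn1 x j
    have hfix' : olfmVec (insert (i, j) E) x j
        = unanStep (insert (i, j) E) x (olfmVec (insert (i, j) E) x) j :=
      olfmVec_fix (insert (i, j) E) layer' hL' hn1 x j
    have hch : olfmVec E x h = x h := olfmVec_noPreds E hn1 x h hhP
    have hiE' : preds (insert (i, j) E) i = ∅ := by
      rw [preds_insert_ne E i j i hij]; exact hi
    have hci : olfmVec (insert (i, j) E) x i = x i :=
      olfmVec_noPreds (insert (i, j) E) hn1 x i hiE'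
    have hpe : preds (insert (i, j) E) j = insert i (preds E j) := preds_insert_self E i j
    have hagree : ∀ p ∈ preds E j, olfmVec (insert (i, j) E) x p = olfmVec E x p := by
      intro p hp
      apply olfm_agree E i j hjS x p
      intro hpj
      rw [hpj] at hp
      have hE : (j, j) ∈ E := mem_preds.1 hp
      have hmem : j ∈ succs E j := by simp [succs, hE]
      rw [hjS] at hmem; simp at hmem
    have hjP' : (preds (insert (i, j) E) j).Nonempty := by
      rw [hpe]; exact insert_nonempty _ _
    rw [hfix, hfix']
    by_cases hT : ∀ p ∈ preds E j, olfmVec E x p = true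
    · have hxh : x h = true := by rw [← hch]; exact hT h hhj
      have hxi : x i = true := hx.trans hxh
      rw [unanStep_eq_true hjP' ?_, unanStep_eq_true hjP hT]
      intro p hp
      rw [hpe] at hp
      rcases Finset.mem_insert.1 hp with rfl | hp
      · rw [hci]; exact hxi
      · rw [hagree p hp]; exact hT p hp
    · by_cases hF : ∀ p ∈ preds E j, olfmVec E x p = false
      · have hxh : x h = false := by rw [← hch]; exact hF h hhj
        have hxi : x i = false := hx.trans hxh
        rw [unanStep_eq_false hjP' ?_, unanStep_eq_false hjP hF]
        intro p hp
        rw [hpe] at hp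
        rcases Finset.mem_insert.1 hp with rfl | hp
        · rw [hci]; exact hxi
        · rw [hagree p hp]; exact hF p hp
      · push_neg at hT hF
        obtain ⟨p1, hp1, hc1⟩ := hT
        obtain ⟨p2, hp2, hc2⟩ := hF
        replace hc1 : olfmVec E x p1 = false := by simpa using hc1
        replace hc2 : olfmVec E x p2 = true := by simpa using hc2
        have hm1 : p1 ∈ preds (insert (i, j) E) j := by
          rw [hpe]; exact Finset.mem_insert_of_mem hp1
        have hm2 : p2 ∈ preds (insert (i, j) E) j := by
          rw [hpe]; exact Finset.mem_insert_of_mem hp2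
        rw [unanStep_mixed hp1 hc1 hp2 hc2,
            unanStep_mixed hm1 (by rw [hagree p1 hp1]; exact hc1)
              hm2 (by rw [hagree p2 hp2]; exact hc2)]
  · exact olfm_agree E i j hjS x v hvj

/-- Horizontal neutrality for OLFM systems: if `i` is an opinion leader or
independent actor, `j` is a follower, `h` is an opinion leader of `j`, and the
second system is obtained by adding the edge `(i, j)`, then the gain of `i`
equals the loss of `h`. -/
theorem olfm_horizontal_neutrality (n : ℕ) (hn : Odd n)
    (E : Finset (Fin n × Fin n)) (layer : Fin n → ℕ) (hL : IsLayered E layer)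
    (i j h : Fin n) (hij : i ≠ j) (hih : i ≠ h) (hjh : j ≠ h)
    (hi : preds E i = ∅)
    (hjP : (preds E j).Nonempty) (hjS : succs E j = ∅)
    (hhP : preds E h = ∅) (hhj : h ∈ preds E j)
    (hE' : IsOLFM (insert (i, j) E)) :
    (SAT (olfmC (insert (i, j) E)) i : ℤ) - SAT (olfmC E) i =
      (SAT (olfmC E) h : ℤ) - SAT (olfmC (insert (i, j) E)) h := by
  obtain ⟨layer', hL'⟩ := hE'
  have hn1 : 1 ≤ n := hn.pos
  have natEq : SAT (olfmC (insert (i, j) E)) i + SAT (olfmC (insert (i, j) E)) h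
      = SAT (olfmC E) i + SAT (olfmC E) h := by
    unfold SAT
    rw [Finset.card_filter, Finset.card_filter, Finset.card_filter, Finset.card_filter,
      ← Finset.sum_add_distrib, ← Finset.sum_add_distrib]
    apply Finset.sum_congr rfl
    intro x _
    by_cases hx : x i = x h
    · have hC : olfmC (insert (i, j) E) x = olfmC E x := by
        unfold olfmC
        rw [key_eq E layer hL hn1 i j h hij hi hjP hjS hhP hhj layer' hL' x hx]
      rw [hC]
    · cases hci : olfmC (insert (i, j) E) x <;> cases hc : olfmC E x <;>
        cases hxi : x i <;> cases hxh : x h <;> simp_all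
  omega
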